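/- Let G = (V,E) be a finite simple graph, and s, s' : V → Bool two configurations such that s' results from s by simultaneously applying, on a set S of vertices where the corresponding rule is enabled (at most one rule per vertex), either the Candidacy rule (requiring s(u)=⊥ and all neighbours ⊥, and possibly setting s'(u)=⊤) or the Withdrawal rule (requiring s(u)=⊤ and some neighbour ⊤, and possibly setting s'(u)=⊥), while vertices outside S keep their value. Then β(s) ⊆ β(s'). -/
import Mathlib


def beta {V : Type*} (G : SimpleGraph V) (s : V → Bool) : Set V :=
  {u | s u = true ∧ ∀ v, G.Adj u v → s v = false}

theorem stmt_9 {V : Type*} [Fintype V] (G : SimpleGraph V) (s s' : V → Bool)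
    (S : Set V)
    (hout : ∀ u ∉ S, s' u = s u)
    (hin : ∀ u ∈ S,
      (s u = false ∧ ∀ v, G.Adj u v → s v = false) ∨
      (s u = true ∧ ∃ v, G.Adj u v ∧ s v = true)) :
    beta G s ⊆ beta G s' := by
  intro u hu
  obtain ⟨hut, hnb⟩ := hu
  have huS : u ∉ S := by
    intro hS
    rcases hin u hS with ⟨hf, _⟩ | ⟨_, v, hadj, hvt⟩
    · simp [hut] at hf
    · simp [hnb v hadj] at hvt
  refine ⟨by rw [hout u huS]; exact hut, ?_⟩
  intro v hadj
  by_cases hvS : v ∈ S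
  · rcases hin v hvS with ⟨_, hall⟩ | ⟨hvt, _⟩
    · exact absurd (hall u hadj.symm) (by simp [hut])
    · exact absurd hvt (by simp [hnb v hadj])
  · rw [hout v hvS]; exact hnb v hadj
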